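/- Let M_c(t) denote the number of 3×3 magic squares all of whose entries lie strictly between 0 and t. Then for every integer t ≥ 1: 6·M_c(t) = (t−2)(t−6)(t−8) if t ≡ 0, 2, 6, or 8 (mod 12); 6·M_c(t) = (t−1)(t²−15t+58) if t ≡ 1 (mod 12); 6·M_c(t) = (t−3)(t²−13t+34) if t ≡ 3 or 11 (mod 12); 6·M_c(t) = (t−4)(t²−12t+28) if t ≡ 4 or 10 (mod 12); 6·M_c(t) = (t−2)(t−5)(t−9) if t ≡ 5 or 9 (mod 12); and 6·M_c(t) = (t−7)(t²−9t+10) if t ≡ 7 (mod 12). -/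

import Mathlib

set_option linter.all false


/-- A 3×3 magic square: all nine entries distinct, all row sums, column sums,
the main diagonal sum and the antidiagonal sum equal. -/
def IsMagicSq (x : Matrix (Fin 3) (Fin 3) ℤ) : Prop :=
  (Function.Injective fun p : Fin 3 × Fin 3 => x p.1 p.2) ∧
  ∃ s : ℤ, (∀ i, ∑ j, x i j = s) ∧ (∀ j, ∑ i, x i j = s) ∧
    x 0 0 + x 1 1 + x 2 2 = s ∧ x 0 2 + x 1 1 + x 2 0 = s

/-- `Mc t` = number of 3×3 magic squares all of whose entries lie strictly
between 0 and t. -/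
noncomputable def Mc (t : ℕ) : ℕ :=
  {x : Matrix (Fin 3) (Fin 3) ℤ |
    IsMagicSq x ∧ ∀ i j, 0 < x i j ∧ x i j < (t : ℤ)}.ncard


open Finset

def goodA (k : ℕ) : Finset ℕ :=
  (Finset.Icc 1 (k-1)).filter fun a => 2*a ≠ k ∧ 3*a ≠ k ∧ 3*a ≠ 2*k
def SZ (t : ℕ) : ℤ := ∑ k ∈ Finset.range t, ((goodA k).card : ℤ) * max 0 ((t:ℤ) - 1 - 2*k)
def hfun (t : ℕ) : ℤ := ∑ k ∈ Finset.range t, if 2*k < t then ((goodA k).card : ℤ) else 0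

lemma wcard (k : ℕ) (hk : 2 ≤ k) :
    ((goodA k).card : ℤ) = k - 1 - (if 2 ∣ k then 1 else 0) - 2 * (if 3 ∣ k then 1 else 0) := by
  have hsplit := Finset.card_filter_add_card_filter_not
    (s := Finset.Icc 1 (k-1)) (p := fun a => 2*a ≠ k ∧ 3*a ≠ k ∧ 3*a ≠ 2*k)
  rw [Nat.card_Icc] at hsplit
  by_cases h2 : 2 ∣ k <;> by_cases h3 : 3 ∣ k
  · obtain ⟨m, rfl⟩ : ∃ m, k = 6*m := ⟨k/6, by omega⟩
    have hm : 1 ≤ m := by omega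
    have : ((Finset.Icc 1 (6*m-1)).filter fun a => ¬(2*a ≠ 6*m ∧ 3*a ≠ 6*m ∧ 3*a ≠ 2*(6*m)))
        = {3*m, 2*m, 4*m} := by ext a; simp; omega
    rw [this] at hsplit
    rw [show ({3*m, 2*m, 4*m} : Finset ℕ).card = 3 by
      rw [Finset.card_insert_of_notMem (by simp; omega),
        Finset.card_insert_of_notMem (by simp; omega), Finset.card_singleton]] at hsplit
    simp only [if_pos h2, if_pos h3]
    unfold goodA; push_cast; omega
  · obtain ⟨m, rfl⟩ : ∃ m, k = 2*m := ⟨k/2, by omega⟩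
    have : ((Finset.Icc 1 (2*m-1)).filter fun a => ¬(2*a ≠ 2*m ∧ 3*a ≠ 2*m ∧ 3*a ≠ 2*(2*m)))
        = {m} := by ext a; simp; omega
    rw [this, Finset.card_singleton] at hsplit
    simp only [if_pos h2, if_neg h3]
    unfold goodA; push_cast; omega
  · obtain ⟨m, rfl⟩ : ∃ m, k = 3*m := ⟨k/3, by omega⟩
    have : ((Finset.Icc 1 (3*m-1)).filter fun a => ¬(2*a ≠ 3*m ∧ 3*a ≠ 3*m ∧ 3*a ≠ 2*(3*m)))
        = {m, 2*m} := by ext a; simp; omega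
    rw [this] at hsplit
    rw [show ({m, 2*m} : Finset ℕ).card = 2 by
      rw [Finset.card_insert_of_notMem (by simp; omega), Finset.card_singleton]] at hsplit
    simp only [if_neg h2, if_pos h3]
    unfold goodA; push_cast; omega
  · have : ((Finset.Icc 1 (k-1)).filter fun a => ¬(2*a ≠ k ∧ 3*a ≠ k ∧ 3*a ≠ 2*k))
        = ∅ := by ext a; simp; omega
    rw [this, Finset.card_empty] at hsplit
    simp only [if_neg h2, if_neg h3]
    unfold goodA; push_cast; omega

lemma szrec (t : ℕ) : SZ (t+1) = SZ t + hfun t := by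
  unfold SZ hfun
  rw [Finset.sum_range_succ, ← Finset.sum_add_distrib]
  have h1 : ((goodA t).card : ℤ) * max 0 ((t:ℤ)+1-1-2*t) = 0 := by
    rcases Nat.eq_zero_or_pos t with rfl | ht
    · simp [goodA]
    · have : max (0:ℤ) ((t:ℤ)+1-1-2*t) = 0 := by omega
      rw [this, mul_zero]
  push_cast
  rw [h1, add_zero]
  apply Finset.sum_congr rfl
  intro k hk
  simp only [Finset.mem_range] at hk
  by_cases h : 2*k < t
  · rw [if_pos h]
    have e1 : max (0:ℤ) ((t:ℤ)+1-1-2*k) = (t:ℤ)-2*k := by omega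
    have e2 : max (0:ℤ) ((t:ℤ)-1-2*k) = (t:ℤ)-1-2*k := by omega
    rw [e1, e2]; ring
  · rw [if_neg h]
    have e1 : max (0:ℤ) ((t:ℤ)+1-1-2*k) = 0 := by omega
    have e2 : max (0:ℤ) ((t:ℤ)-1-2*k) = 0 := by omega
    rw [e1, e2]; ring

lemma hrec (t : ℕ) : hfun (t+1) = hfun t + (if 2 ∣ t then ((goodA (t/2)).card : ℤ) else 0) := by
  unfold hfun
  rw [show (∑ k ∈ Finset.range t, if 2*k < t then ((goodA k).card:ℤ) else 0)
      = ∑ k ∈ Finset.range (t+1), if 2*k < t then ((goodA k).card:ℤ) else 0 from by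
    rw [Finset.sum_range_succ, if_neg (by omega), add_zero]]
  have step : ∀ k ∈ Finset.range (t+1), (if 2*k < t+1 then ((goodA k).card:ℤ) else 0)
      = (if 2*k < t then ((goodA k).card:ℤ) else 0) + (if 2*k = t then ((goodA k).card:ℤ) else 0) := by
    intro k _
    by_cases h1 : 2*k < t
    · rw [if_pos (by omega), if_pos h1, if_neg (by omega), add_zero]
    · by_cases h2 : 2*k = t
      · rw [if_pos (by omega), if_neg h1, if_pos h2, zero_add]
      · rw [if_neg (by omega), if_neg h1, if_neg h2, add_zero]
  rw [Finset.sum_congr rfl step, Finset.sum_add_distrib]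
  congr 1
  by_cases h2 : 2 ∣ t
  · obtain ⟨m, rfl⟩ : ∃ m, t = 2*m := ⟨t/2, by omega⟩
    rw [if_pos ⟨m, rfl⟩]
    have e : ∀ k ∈ Finset.range (2*m+1), (if 2*k = 2*m then ((goodA k).card:ℤ) else 0)
        = if k = m then ((goodA k).card:ℤ) else 0 := by
      intro k _
      by_cases h : k = m
      · simp [h]
      · rw [if_neg (by omega), if_neg h]
    rw [Finset.sum_congr rfl e, Finset.sum_ite_eq' (Finset.range (2*m+1)) m]
    rw [if_pos (by simp; omega), show (2*m)/2 = m from by omega]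
  · rw [if_neg h2]
    apply Finset.sum_eq_zero
    intro k _
    rw [if_neg (fun h => h2 ⟨k, by omega⟩)]

def P (t : ℕ) : ℤ :=
  if t % 12 = 1 then ((t:ℤ) - 1) * ((t:ℤ)^2 - 15*(t:ℤ) + 58)
  else if t % 12 = 3 ∨ t % 12 = 11 then ((t:ℤ) - 3) * ((t:ℤ)^2 - 13*(t:ℤ) + 34)
  else if t % 12 = 4 ∨ t % 12 = 10 then ((t:ℤ) - 4) * ((t:ℤ)^2 - 12*(t:ℤ) + 28)
  else if t % 12 = 5 ∨ t % 12 = 9 then ((t:ℤ) - 2) * ((t:ℤ) - 5) * ((t:ℤ) - 9)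
  else if t % 12 = 7 then ((t:ℤ) - 7) * ((t:ℤ)^2 - 9*(t:ℤ) + 10)
  else ((t:ℤ) - 2) * ((t:ℤ) - 6) * ((t:ℤ) - 8)

def R (t : ℕ) : ℤ :=
  if t % 12 = 0 then 3*(t:ℤ)^2 + (-32)*(t:ℤ) + 96
  else if t % 12 = 1 then 3*(t:ℤ)^2 + (-26)*(t:ℤ) + 23
  else if t % 12 = 2 then 3*(t:ℤ)^2 + (-32)*(t:ℤ) + 52
  else if t % 12 = 3 then 3*(t:ℤ)^2 + (-26)*(t:ℤ) + 51
  else if t % 12 = 4 then 3*(t:ℤ)^2 + (-32)*(t:ℤ) + 80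
  else if t % 12 = 5 then 3*(t:ℤ)^2 + (-26)*(t:ℤ) + 55
  else if t % 12 = 6 then 3*(t:ℤ)^2 + (-32)*(t:ℤ) + 84
  else if t % 12 = 7 then 3*(t:ℤ)^2 + (-26)*(t:ℤ) + 35
  else if t % 12 = 8 then 3*(t:ℤ)^2 + (-32)*(t:ℤ) + 64
  else if t % 12 = 9 then 3*(t:ℤ)^2 + (-26)*(t:ℤ) + 39
  else if t % 12 = 10 then 3*(t:ℤ)^2 + (-32)*(t:ℤ) + 68
  else 3*(t:ℤ)^2 + (-26)*(t:ℤ) + 67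

set_option maxHeartbeats 2000000 in
lemma key : ∀ t : ℕ, 1 ≤ t → 24 * SZ t = P t ∧ 24 * hfun t = R t := by
  intro t
  induction t using Nat.strong_induction_on with
  | _ t IH =>
    intro ht
    by_cases hsmall : t ≤ 26
    · interval_cases t <;> exact ⟨by decide, by decide⟩
    · obtain ⟨u, rfl⟩ : ∃ u, t = u + 1 := ⟨t - 1, by omega⟩
      obtain ⟨IH1, IH2⟩ := IH u (by omega) (by omega)
      have hr : u % 12 = 0 ∨ u % 12 = 1 ∨ u % 12 = 2 ∨ u % 12 = 3 ∨ u % 12 = 4 ∨ u % 12 = 5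
        ∨ u % 12 = 6 ∨ u % 12 = 7 ∨ u % 12 = 8 ∨ u % 12 = 9 ∨ u % 12 = 10 ∨ u % 12 = 11 := by omega
      constructor
      · rw [szrec, mul_add, IH1, IH2]
        rcases hr with h|h|h|h|h|h|h|h|h|h|h|h
        · simp only [P, R, h, show (u+1) % 12 = 1 from by omega]
          norm_num
          push_cast
          ring
        · simp only [P, R, h, show (u+1) % 12 = 2 from by omega]
          norm_num
          push_cast
          ring
        · simp only [P, R, h, show (u+1) % 12 = 3 from by omega]
          norm_num
          push_cast
          ring
        · simp only [P, R, h, show (u+1) % 12 = 4 from by omega]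
          norm_num
          push_cast
          ring
        · simp only [P, R, h, show (u+1) % 12 = 5 from by omega]
          norm_num
          push_cast
          ring
        · simp only [P, R, h, show (u+1) % 12 = 6 from by omega]
          norm_num
          push_cast
          ring
        · simp only [P, R, h, show (u+1) % 12 = 7 from by omega]
          norm_num
          push_cast
          ring
        · simp only [P, R, h, show (u+1) % 12 = 8 from by omega]
          norm_num
          push_cast
          ring
        · simp only [P, R, h, show (u+1) % 12 = 9 from by omega]
          norm_num
          push_cast
          ring
        · simp only [P, R, h, show (u+1) % 12 = 10 from by omega]
          norm_num
          push_cast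
          ring
        · simp only [P, R, h, show (u+1) % 12 = 11 from by omega]
          norm_num
          push_cast
          ring
        · simp only [P, R, h, show (u+1) % 12 = 0 from by omega]
          norm_num
          push_cast
          ring
      · rw [hrec, mul_add, IH2]
        rcases hr with h|h|h|h|h|h|h|h|h|h|h|h
        · rw [if_pos (by omega)]
          rw [wcard (u/2) (by omega)]
          obtain ⟨m, rfl⟩ : ∃ m, u = 2*m := ⟨u/2, by omega⟩
          rw [show (2*m)/2 = m from by omega]
          rw [if_pos (by omega : 2 ∣ m), if_pos (by omega : 3 ∣ m)]
          simp only [R, h, show (2*m+1) % 12 = 1 from by omega]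
          norm_num
          push_cast
          ring
        · rw [if_neg (by omega), mul_zero, add_zero]
          simp only [R, h, show (u+1) % 12 = 2 from by omega]
          norm_num
          push_cast
          ring
        · rw [if_pos (by omega)]
          rw [wcard (u/2) (by omega)]
          obtain ⟨m, rfl⟩ : ∃ m, u = 2*m := ⟨u/2, by omega⟩
          rw [show (2*m)/2 = m from by omega]
          rw [if_neg (by omega : ¬ 2 ∣ m), if_neg (by omega : ¬ 3 ∣ m)]
          simp only [R, h, show (2*m+1) % 12 = 3 from by omega]
          norm_num
          push_cast
          ring
        · rw [if_neg (by omega), mul_zero, add_zero]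
          simp only [R, h, show (u+1) % 12 = 4 from by omega]
          norm_num
          push_cast
          ring
        · rw [if_pos (by omega)]
          rw [wcard (u/2) (by omega)]
          obtain ⟨m, rfl⟩ : ∃ m, u = 2*m := ⟨u/2, by omega⟩
          rw [show (2*m)/2 = m from by omega]
          rw [if_pos (by omega : 2 ∣ m), if_neg (by omega : ¬ 3 ∣ m)]
          simp only [R, h, show (2*m+1) % 12 = 5 from by omega]
          norm_num
          push_cast
          ring
        · rw [if_neg (by omega), mul_zero, add_zero]
          simp only [R, h, show (u+1) % 12 = 6 from by omega]
          norm_num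
          push_cast
          ring
        · rw [if_pos (by omega)]
          rw [wcard (u/2) (by omega)]
          obtain ⟨m, rfl⟩ : ∃ m, u = 2*m := ⟨u/2, by omega⟩
          rw [show (2*m)/2 = m from by omega]
          rw [if_neg (by omega : ¬ 2 ∣ m), if_pos (by omega : 3 ∣ m)]
          simp only [R, h, show (2*m+1) % 12 = 7 from by omega]
          norm_num
          push_cast
          ring
        · rw [if_neg (by omega), mul_zero, add_zero]
          simp only [R, h, show (u+1) % 12 = 8 from by omega]
          norm_num
          push_cast
          ring
        · rw [if_pos (by omega)]
          rw [wcard (u/2) (by omega)]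
          obtain ⟨m, rfl⟩ : ∃ m, u = 2*m := ⟨u/2, by omega⟩
          rw [show (2*m)/2 = m from by omega]
          rw [if_pos (by omega : 2 ∣ m), if_neg (by omega : ¬ 3 ∣ m)]
          simp only [R, h, show (2*m+1) % 12 = 9 from by omega]
          norm_num
          push_cast
          ring
        · rw [if_neg (by omega), mul_zero, add_zero]
          simp only [R, h, show (u+1) % 12 = 10 from by omega]
          norm_num
          push_cast
          ring
        · rw [if_pos (by omega)]
          rw [wcard (u/2) (by omega)]
          obtain ⟨m, rfl⟩ : ∃ m, u = 2*m := ⟨u/2, by omega⟩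
          rw [show (2*m)/2 = m from by omega]
          rw [if_neg (by omega : ¬ 2 ∣ m), if_neg (by omega : ¬ 3 ∣ m)]
          simp only [R, h, show (2*m+1) % 12 = 11 from by omega]
          norm_num
          push_cast
          ring
        · rw [if_neg (by omega), mul_zero, add_zero]
          simp only [R, h, show (u+1) % 12 = 0 from by omega]
          norm_num
          push_cast
          ring

def fm (c a b : ℤ) : Matrix (Fin 3) (Fin 3) ℤ :=
  !![c+a, c-a-b, c+b; c-a+b, c, c+a-b; c-b, c+a+b, c-a]

noncomputable def B (t : ℕ) : Finset (ℤ × ℤ × ℤ) :=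
  ((Finset.Icc (1:ℤ) (t:ℤ)) ×ˢ (Finset.Icc (-(t:ℤ)) (t:ℤ)) ×ˢ (Finset.Icc (-(t:ℤ)) (t:ℤ))).filter
    (fun p => (p.2.1 ≠ 0 ∧ p.2.2 ≠ 0 ∧ p.2.1 ≠ p.2.2 ∧ p.2.1 ≠ -p.2.2 ∧ p.2.2 ≠ 2*p.2.1 ∧
       p.2.2 ≠ -(2*p.2.1) ∧ p.2.1 ≠ 2*p.2.2 ∧ p.2.1 ≠ -(2*p.2.2)) ∧
      1 ≤ p.1 - (p.2.1.natAbs : ℤ) - (p.2.2.natAbs : ℤ) ∧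
      p.1 + (p.2.1.natAbs : ℤ) + (p.2.2.natAbs : ℤ) ≤ (t:ℤ) - 1)

lemma fm_inj : Function.Injective (fun p : ℤ × ℤ × ℤ => fm p.1 p.2.1 p.2.2) := by
  rintro ⟨c, a, b⟩ ⟨c', a', b'⟩ h
  simp only at h
  have h11 : fm c a b 1 1 = fm c' a' b' 1 1 := by rw [h]
  have h00 : fm c a b 0 0 = fm c' a' b' 0 0 := by rw [h]
  have h02 : fm c a b 0 2 = fm c' a' b' 0 2 := by rw [h]
  simp [fm] at h11 h00 h02
  simp only [Prod.mk.injEq]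
  refine ⟨by omega, by omega, by omega⟩

set_option maxHeartbeats 4000000 in
lemma set_eq (t : ℕ) :
    {x : Matrix (Fin 3) (Fin 3) ℤ | IsMagicSq x ∧ ∀ i j, 0 < x i j ∧ x i j < (t : ℤ)}
      = (fun p : ℤ × ℤ × ℤ => fm p.1 p.2.1 p.2.2) '' ↑(B t) := by
  ext x
  constructor
  · rintro ⟨⟨hinj, s, hrow, hcol, hd, ha⟩, hb⟩
    have e0 := hrow 0; have e1 := hrow 1; have e2 := hrow 2
    have f0 := hcol 0; have f1 := hcol 1; have f2 := hcol 2
    simp [Fin.sum_univ_three] at e0 e1 e2 f0 f1 f2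
    have key : ∀ (i j k l : Fin 3), x i j = x k l → ((i,j) : Fin 3 × Fin 3) = (k,l) :=
      fun i j k l h => hinj (a₁ := (i,j)) (a₂ := (k,l)) h
    have h00 := hb 0 0; have h01 := hb 0 1; have h02 := hb 0 2
    have h10 := hb 1 0; have h11 := hb 1 1; have h12 := hb 1 2
    have h20 := hb 2 0; have h21 := hb 2 1; have h22 := hb 2 2
    refine ⟨(x 1 1, x 0 0 - x 1 1, x 0 2 - x 1 1), ?_, ?_⟩
    · simp only [B, Finset.coe_filter, Finset.mem_coe, Finset.mem_product, Finset.mem_Icc,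
        Set.mem_setOf_eq]
      refine ⟨⟨⟨?_, ?_⟩, ⟨?_, ?_⟩, ?_, ?_⟩, ⟨?_, ?_, ?_, ?_, ?_, ?_, ?_, ?_⟩, ?_, ?_⟩
      · omega
      · omega
      · omega
      · omega
      · omega
      · omega
      · exact fun h => absurd (key 0 0 1 1 (by omega)) (by decide)
      · exact fun h => absurd (key 0 2 1 1 (by omega)) (by decide)
      · exact fun h => absurd (key 0 0 0 2 (by omega)) (by decide)
      · exact fun h => absurd (key 0 0 2 0 (by omega)) (by decide)
      · exact fun h => absurd (key 0 0 1 0 (by omega)) (by decide)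
      · exact fun h => absurd (key 0 0 0 1 (by omega)) (by decide)
      · exact fun h => absurd (key 0 2 1 2 (by omega)) (by decide)
      · exact fun h => absurd (key 2 0 2 1 (by omega)) (by decide)
      · omega
      · omega
    · ext i j
      fin_cases i <;> fin_cases j <;> simp [fm] <;> omega
  · rintro ⟨⟨c, a, b⟩, hp, rfl⟩
    simp only [B, Finset.coe_filter, Finset.mem_coe, Finset.mem_product, Finset.mem_Icc,
      Set.mem_setOf_eq] at hp
    obtain ⟨⟨hc, hA, hB⟩, ⟨n1, n2, n3, n4, n5, n6, n7, n8⟩, g1, g2⟩ := hp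
    refine ⟨⟨?_, 3*c, ?_, ?_, by simp [fm]; ring, by simp [fm]; ring⟩, ?_⟩
    · rintro ⟨i, j⟩ ⟨k, l⟩ hpq
      simp only at hpq
      fin_cases i <;> fin_cases j <;> fin_cases k <;> fin_cases l <;>
        first
        | rfl
        | (exfalso; simp [fm] at hpq; omega)
    · intro i
      fin_cases i <;> simp [fm, Fin.sum_univ_three] <;> ring
    · intro j
      fin_cases j <;> simp [fm, Fin.sum_univ_three] <;> ring
    · intro i j
      fin_cases i <;> fin_cases j <;> simp [fm] <;> omega

lemma mc_card (t : ℕ) : Mc t = (B t).card := by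
  rw [Mc, set_eq, Set.ncard_image_of_injective _ fm_inj, Set.ncard_coe_finset]

lemma fiber_card (t k : ℕ) (hk : k < t) :
    ((B t).filter fun p => p.2.1.natAbs + p.2.2.natAbs = k).card
      = 4 * ((goodA k).card * ((t:ℤ) - 1 - 2*k).toNat) := by
  have key := Finset.card_nbij'
    (i := fun q : (ℕ × (ℤ × ℤ)) × ℤ =>
      (q.2, q.1.2.1 * (q.1.1 : ℤ), q.1.2.2 * ((k : ℤ) - (q.1.1 : ℤ))))
    (j := fun p : ℤ × ℤ × ℤ =>
      ((p.2.1.natAbs, (if 0 ≤ p.2.1 then (1:ℤ) else -1, if 0 ≤ p.2.2 then (1:ℤ) else -1)), p.1))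
    (s := (goodA k ×ˢ (({-1,1} : Finset ℤ) ×ˢ ({-1,1} : Finset ℤ))) ×ˢ
      Finset.Icc ((k:ℤ)+1) ((t:ℤ)-1-k))
    (t := (B t).filter fun p => p.2.1.natAbs + p.2.2.natAbs = k)
    ?_ ?_ ?_ ?_
  · rw [← key]
    rw [Finset.card_product, Finset.card_product, Finset.card_product,
      Finset.card_pair (show (-1:ℤ) ≠ 1 by norm_num), Int.card_Icc,
      show ((t:ℤ) - 1 - ↑k + 1 - (↑k + 1)) = (t:ℤ) - 1 - 2*k by ring]
    ring
  · rintro ⟨⟨a, s, u⟩, c⟩ (hq : _ ∈ (_ : Finset _))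
    simp only [Finset.mem_product, Finset.mem_Icc, Finset.mem_insert, Finset.mem_singleton,
      goodA, Finset.mem_filter] at hq
    obtain ⟨⟨⟨⟨ha1, ha2⟩, ha3, ha4, ha5⟩, hs, hu⟩, hc1, hc2⟩ := hq
    simp only [B, Finset.mem_coe, Finset.mem_filter, Finset.mem_product, Finset.mem_Icc]
    rcases hs with rfl | rfl <;> rcases hu with rfl | rfl <;> omega
  · rintro ⟨c, a, b⟩ (hp : _ ∈ (_ : Finset _))
    simp only [B, Finset.mem_filter, Finset.mem_product, Finset.mem_Icc] at hp
    simp only [Finset.mem_coe, Finset.mem_product, Finset.mem_Icc, Finset.mem_insert, Finset.mem_singleton,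
      goodA, Finset.mem_filter]
    split_ifs <;> omega
  · rintro ⟨⟨a, s, u⟩, c⟩ (hq : _ ∈ (_ : Finset _))
    simp only [Finset.mem_product, Finset.mem_Icc, Finset.mem_insert, Finset.mem_singleton,
      goodA, Finset.mem_filter] at hq
    obtain ⟨⟨⟨⟨ha1, ha2⟩, ha3, ha4, ha5⟩, hs, hu⟩, hc1, hc2⟩ := hq
    simp only [Prod.mk.injEq, true_and, and_true, eq_self_iff_true]
    rcases hs with rfl | rfl <;> rcases hu with rfl | rfl <;> split_ifs <;> omega
  · rintro ⟨c, a, b⟩ (hp : _ ∈ (_ : Finset _))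
    simp only [B, Finset.mem_filter, Finset.mem_product, Finset.mem_Icc] at hp
    simp only [Prod.mk.injEq, true_and, and_true, eq_self_iff_true]
    split_ifs <;> omega

lemma card_B (t : ℕ) : ((B t).card : ℤ) = 4 * SZ t := by
  rw [Finset.card_eq_sum_card_fiberwise
    (f := fun p : ℤ × ℤ × ℤ => p.2.1.natAbs + p.2.2.natAbs) (t := Finset.range t) ?_]
  · rw [SZ, Finset.mul_sum]
    push_cast
    apply Finset.sum_congr rfl
    intro k hk
    simp only [Finset.mem_range] at hk
    rw [fiber_card t k hk]
    push_cast
    rw [show max (0:ℤ) ((t:ℤ) - 1 - 2*k) = ((((t:ℤ) - 1 - 2*k).toNat : ℤ)) from by omega]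
    try ring
  · intro p hp
    simp only [B, Finset.mem_coe, Finset.mem_filter, Finset.mem_product, Finset.mem_Icc] at hp
    simp only [Finset.mem_coe, Finset.mem_range]
    omega

theorem magic_cubic_count (t : ℕ) (ht : 1 ≤ t) :
    ((t % 12 = 0 ∨ t % 12 = 2 ∨ t % 12 = 6 ∨ t % 12 = 8) →
      6 * (Mc t : ℤ) = ((t : ℤ) - 2) * ((t : ℤ) - 6) * ((t : ℤ) - 8)) ∧
    (t % 12 = 1 →
      6 * (Mc t : ℤ) = ((t : ℤ) - 1) * ((t : ℤ)^2 - 15*(t : ℤ) + 58)) ∧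
    ((t % 12 = 3 ∨ t % 12 = 11) →
      6 * (Mc t : ℤ) = ((t : ℤ) - 3) * ((t : ℤ)^2 - 13*(t : ℤ) + 34)) ∧
    ((t % 12 = 4 ∨ t % 12 = 10) →
      6 * (Mc t : ℤ) = ((t : ℤ) - 4) * ((t : ℤ)^2 - 12*(t : ℤ) + 28)) ∧
    ((t % 12 = 5 ∨ t % 12 = 9) →
      6 * (Mc t : ℤ) = ((t : ℤ) - 2) * ((t : ℤ) - 5) * ((t : ℤ) - 9)) ∧
    (t % 12 = 7 →
      6 * (Mc t : ℤ) = ((t : ℤ) - 7) * ((t : ℤ)^2 - 9*(t : ℤ) + 10)) := by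
  have hmc : 6 * (Mc t : ℤ) = P t := by
    rw [show ((Mc t : ℤ)) = (((B t).card : ℕ) : ℤ) from by rw [mc_card], card_B,
      ← (key t ht).1]
    ring
  refine ⟨?_, ?_, ?_, ?_, ?_, ?_⟩
  · rintro (h|h|h|h) <;> rw [hmc] <;> simp [P, h]
  · intro h; rw [hmc]; simp [P, h]
  · rintro (h|h) <;> rw [hmc] <;> simp [P, h]
  · rintro (h|h) <;> rw [hmc] <;> simp [P, h]
  · rintro (h|h) <;> rw [hmc] <;> simp [P, h]
  · intro h; rw [hmc]; simp [P, h]
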